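/- Let D be a domain in ℝ^N, N ≥ 2, let u : D → [0, +∞) be a nonnegative subharmonic function, and let p > 0. Then there exists a constant C = C(N, p), depending only on N and p, such that u(x)^p ≤ (C/(ν_N r^N)) ∫_{B^N(x,r)} u(y)^p dm_N(y) for every x ∈ D and r > 0 with the closed ball B̄^N(x,r) ⊂ D. -/

import Mathlib

open MeasureTheory Metric Set Filter ENNReal Topology

noncomputable section

/-- The nonnegative part of an extended real number, as an element of `ℝ≥0∞`. -/
noncomputable def erealPos (x : EReal) : ℝ≥0∞ :=
  if x = ⊤ then ⊤ else ENNReal.ofReal x.toReal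

/-- The extended-real-valued Lebesgue integral of `u : V → [-∞,+∞]` over a set `A`:
the `lintegral` of the positive part minus the `lintegral` of the negative part. -/
noncomputable def esInt {V : Type*} [MeasureSpace V] (A : Set V) (u : V → EReal) : EReal :=
  ((∫⁻ y in A, erealPos (u y) : ℝ≥0∞) : EReal) - ((∫⁻ y in A, erealPos (-(u y)) : ℝ≥0∞) : EReal)

/-- `u` is subharmonic on `D`: it takes values in `[-∞, +∞)` on `D`, is upper semicontinuous
on `D`, and satisfies the sub-mean value inequality `u x ≤ (1/(ν_N r^N)) ∫_{B(x,r)} u dm_N`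
whenever the closed ball `B̄(x,r) ⊆ D`.  (Note `volume (ball x r) = ν_N r^N` in `ℝ^N`.) -/
def IsSubh {V : Type*} [MeasureSpace V] [PseudoMetricSpace V] (D : Set V) (u : V → EReal) : Prop :=
  UpperSemicontinuousOn u D ∧ (∀ x ∈ D, u x ≠ ⊤) ∧
    ∀ x ∈ D, ∀ r > (0:ℝ), closedBall x r ⊆ D →
      u x ≤ ((((volume (ball x r)).toReal)⁻¹ : ℝ) : EReal) * esInt (ball x r) u

/-- `u` is nearly subharmonic on `D`: it is measurable, takes values in `[-∞, +∞)` on `D`,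
`u⁺` is locally integrable on `D`, and `u` satisfies the sub-mean value inequality on all
closed balls contained in `D`. -/
def IsNearlySubh {V : Type*} [MeasureSpace V] [PseudoMetricSpace V] (D : Set V)
    (u : V → EReal) : Prop :=
  Measurable u ∧ (∀ x ∈ D, u x ≠ ⊤) ∧
    LocallyIntegrableOn (fun y => ((u y) ⊔ 0).toReal) D volume ∧
    ∀ x ∈ D, ∀ r > (0:ℝ), closedBall x r ⊆ D →
      u x ≤ ((((volume (ball x r)).toReal)⁻¹ : ℝ) : EReal) * esInt (ball x r) u

/-- `u` is `K`-quasinearly subharmonic on `D`: it is measurable, takes values in `[-∞, +∞)`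
on `D`, `u⁺` is locally integrable on `D`, and for every `M ≥ 0` the function
`u_M := max {u, -M} + M` satisfies `u_M x ≤ (K/(ν_N r^N)) ∫_{B(x,r)} u_M dm_N` whenever
`B̄(x,r) ⊆ D`. -/
def IsQNS {V : Type*} [MeasureSpace V] [PseudoMetricSpace V] (K : ℝ) (D : Set V)
    (u : V → EReal) : Prop :=
  Measurable u ∧ (∀ x ∈ D, u x ≠ ⊤) ∧
    LocallyIntegrableOn (fun y => ((u y) ⊔ 0).toReal) D volume ∧
    ∀ M : ℝ, 0 ≤ M → ∀ x ∈ D, ∀ r > (0:ℝ), closedBall x r ⊆ D →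
      (u x ⊔ ((-M : ℝ) : EReal)) + (M : EReal) ≤
        ((K * ((volume (ball x r)).toReal)⁻¹ : ℝ) : EReal) *
          esInt (ball x r) (fun y => (u y ⊔ ((-M : ℝ) : EReal)) + (M : EReal))

-- pointwise lemma
lemma pw_rpow {a m p : ℝ} (ha : 0 ≤ a) (ham : a ≤ m) (hp : 0 < p) (hp1 : p ≤ 1) :
    a ≤ m ^ (1 - p) * a ^ p := by
  rcases ha.eq_or_lt with h0 | h0
  · rw [← h0, Real.zero_rpow hp.ne', mul_zero]
  · have h1 : a = a ^ (1 - p) * a ^ p := by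
      rw [← Real.rpow_add h0]; norm_num
    conv_lhs => rw [h1]
    exact mul_le_mul_of_nonneg_right
      (Real.rpow_le_rpow ha ham (show (0:ℝ) ≤ 1 - p by linarith)) (Real.rpow_nonneg ha p)

lemma usc_real {α : Type*} [TopologicalSpace α] {u : α → ℝ} {D : Set α}
    (h : UpperSemicontinuousOn (fun x => (u x : EReal)) D) : UpperSemicontinuousOn u D := by
  intro x hx y hy
  filter_upwards [h x hx (y : EReal) (by exact_mod_cast hy : (u x : EReal) < (y : EReal))] with z hz
  exact_mod_cast hz

lemma usc_bdd {α : Type*} [TopologicalSpace α] {u : α → ℝ} {D K : Set α} (hD : IsOpen D)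
    (h : UpperSemicontinuousOn u D) (hK : IsCompact K) (hKD : K ⊆ D) :
    ∃ M, ∀ y ∈ K, u y ≤ M := by
  have hU : ∀ x (hx : x ∈ K), {z | u z < u x + 1} ∈ 𝓝 x := by
    intro x hx
    have h1 : ∀ᶠ z in 𝓝[D] x, u z < u x + 1 := h x (hKD hx) (u x + 1) (lt_add_one _)
    rwa [nhdsWithin_eq_nhds.2 (hD.mem_nhds (hKD hx))] at h1
  obtain ⟨t, ht⟩ := hK.elim_nhds_subcover' (fun x hx => {z | u z < u x + 1}) hU
  obtain ⟨M, hM⟩ := (t.image fun x => u x.1 + 1).exists_le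
  refine ⟨M, fun y hy => ?_⟩
  obtain ⟨x, hxt, hxy⟩ := mem_iUnion₂.1 (ht hy)
  exact le_of_lt (lt_of_lt_of_le hxy (hM _ (Finset.mem_image_of_mem _ hxt)))

lemma meas_ind {α : Type*} [TopologicalSpace α] [MeasurableSpace α] [OpensMeasurableSpace α]
    {u : α → ℝ} {D : Set α} (hD : IsOpen D) (h : UpperSemicontinuousOn u D) :
    Measurable (D.indicator u) := by
  apply measurable_of_Iio
  intro a
  have hopen : IsOpen {x | x ∈ D ∧ u x < a} := by
    rw [isOpen_iff_mem_nhds]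
    rintro x ⟨hxD, hxa⟩
    have h1 : ∀ᶠ z in 𝓝[D] x, u z < a := h x hxD a hxa
    rw [nhdsWithin_eq_nhds.2 (hD.mem_nhds hxD)] at h1
    filter_upwards [h1, hD.mem_nhds hxD] with z hz hzD
    exact ⟨hzD, hz⟩
  by_cases ha : 0 < a
  · have : D.indicator u ⁻¹' Iio a = {x | x ∈ D ∧ u x < a} ∪ Dᶜ := by
      ext x
      by_cases hx : x ∈ D <;>
        simp [Set.indicator_apply, hx, ha, mem_Iio]
    rw [this]
    exact hopen.measurableSet.union hD.measurableSet.compl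
  · have : D.indicator u ⁻¹' Iio a = {x | x ∈ D ∧ u x < a} := by
      ext x
      by_cases hx : x ∈ D <;>
        simp [Set.indicator_apply, hx, ha, mem_Iio]
    rw [this]
    exact hopen.measurableSet

lemma submean_real {N : ℕ} {D : Set (EuclideanSpace ℝ (Fin N))}
    {u : EuclideanSpace ℝ (Fin N) → ℝ}
    (hpos : ∀ x ∈ D, 0 ≤ u x)
    (hsub : ∀ x ∈ D, ∀ r > (0:ℝ), closedBall x r ⊆ D →
      (u x : EReal) ≤ ((((volume (ball x r)).toReal)⁻¹ : ℝ) : EReal) *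
        esInt (ball x r) (fun y => (u y : EReal)))
    {x : EuclideanSpace ℝ (Fin N)} (hx : x ∈ D) {r : ℝ} (hr : 0 < r)
    (hball : closedBall x r ⊆ D)
    (hint : IntegrableOn (D.indicator u) (ball x r)) :
    u x ≤ ((volume (ball x r)).toReal)⁻¹ * ∫ y in ball x r, D.indicator u y := by
  have hsubD : ball x r ⊆ D := fun y hy => hball (ball_subset_closedBall hy)
  have hnn : 0 ≤ ∫ y in ball x r, D.indicator u y :=
    setIntegral_nonneg measurableSet_ball fun y _ => Set.indicator_nonneg (fun z hz => hpos z hz) y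
  have h1 : ∫⁻ y in ball x r, erealPos ((u y : EReal)) =
      ENNReal.ofReal (∫ y in ball x r, D.indicator u y) := by
    rw [setLIntegral_congr_fun measurableSet_ball
        (fun y (hy : y ∈ ball x r) =>
          show erealPos ((u y : EReal)) = ENNReal.ofReal (D.indicator u y) by
            simp [erealPos, Set.indicator_of_mem (hsubD hy)])]
    exact (MeasureTheory.ofReal_integral_eq_lintegral_ofReal hint
      (ae_of_all _ (fun y => Set.indicator_nonneg (fun z hz => hpos z hz) y))).symm
  have h2 : ∫⁻ y in ball x r, erealPos (-(u y : EReal)) = 0 := by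
    rw [setLIntegral_congr_fun measurableSet_ball
        (fun y (hy : y ∈ ball x r) =>
          show erealPos (-(u y : EReal)) = 0 by
            rw [← EReal.coe_neg]
            simp only [erealPos, EReal.coe_ne_top, if_false, EReal.toReal_coe]
            exact ENNReal.ofReal_eq_zero.2 (neg_nonpos.2 (hpos y (hsubD hy))))]
    exact lintegral_zero
  have h3 := hsub x hx r hr hball
  rw [esInt, h1, h2] at h3
  rw [EReal.coe_ennreal_zero, sub_zero, EReal.coe_ennreal_ofReal, max_eq_left hnn,
    ← EReal.coe_mul] at h3
  exact EReal.coe_le_coe_iff.1 h3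

lemma iter_key {q g : ℝ} (hq0 : 0 < q) (hq1 : q < 1) (hg : 1 < g) :
    ∃ C₀ : ℝ, 1 ≤ C₀ ∧ ∀ (a : ℕ → ℝ) (B : ℝ), (∀ k, 0 ≤ a k) → (∀ k, a k ≤ B) →
      (∀ k, a k ≤ g ^ (k + 1) * a (k + 1) ^ q) → a 0 ≤ C₀ := by
  set lam : ℝ := q⁻¹ with hlam
  have hlam1 : 1 < lam := (one_lt_inv₀ hq0).2 hq1
  have hlamq : q * lam = 1 := mul_inv_cancel₀ hq0.ne'
  have hlg : 0 < Real.log g := Real.log_pos hg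
  set lg : ℝ := Real.log g with hlgdef
  set al : ℝ := lam * lg / (lam - 1) with hal
  set be : ℝ := (al + lam * lg) / (lam - 1) with hbe
  have hlam0 : 0 < lam - 1 := by linarith
  have hal0 : 0 < al := div_pos (mul_pos (by linarith) hlg) hlam0
  have halq : al * (lam - 1) = lam * lg := div_mul_cancel₀ _ hlam0.ne'
  have hbeq : be * (lam - 1) = al + lam * lg := div_mul_cancel₀ _ hlam0.ne'
  refine ⟨max 1 (Real.exp (be + 1)), le_max_left _ _, fun a B ha hB hrec => ?_⟩
  by_contra hlt
  push_neg at hlt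
  have hB0 : 0 < B := lt_of_lt_of_le ((lt_of_lt_of_le zero_lt_one (le_max_left _ _)).trans hlt) (hB 0)
  -- main induction
  have key : ∀ k, 0 < a k ∧ al * k + be + lam ^ k ≤ Real.log (a k) := by
    intro k
    induction k with
    | zero =>
      have h0 : 0 < a 0 := lt_of_lt_of_le ((lt_of_lt_of_le zero_lt_one (le_max_left _ _)).trans hlt) le_rfl
      refine ⟨h0, ?_⟩
      have : Real.exp (be + 1) ≤ a 0 := le_of_lt (lt_of_le_of_lt (le_max_right _ _) hlt)
      have := (Real.le_log_iff_exp_le h0).2 this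
      simpa using this
    | succ k ih =>
      obtain ⟨hak, hlog⟩ := ih
      have hak1 : 0 < a (k + 1) := by
        rcases (ha (k+1)).eq_or_lt with h | h
        · exfalso
          have := hrec k
          rw [← h, Real.zero_rpow hq0.ne', mul_zero] at this
          exact absurd this (not_le.2 hak)
        · exact h
      refine ⟨hak1, ?_⟩
      have hlog2 : Real.log (a k) ≤ (k + 1 : ℕ) * lg + q * Real.log (a (k + 1)) := by
        calc Real.log (a k) ≤ Real.log (g ^ (k + 1) * a (k + 1) ^ q) :=
              Real.log_le_log hak (hrec k)
          _ = (k + 1 : ℕ) * lg + q * Real.log (a (k + 1)) := by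
              rw [Real.log_mul (by positivity) (by positivity), Real.log_pow,
                Real.log_rpow hak1]
      have hstep : lam * (Real.log (a k) - (k + 1 : ℕ) * lg) ≤ Real.log (a (k + 1)) := by
        have h4 : Real.log (a k) - (k + 1 : ℕ) * lg ≤ q * Real.log (a (k + 1)) := by linarith
        calc lam * (Real.log (a k) - (k + 1 : ℕ) * lg) ≤ lam * (q * Real.log (a (k + 1))) :=
              mul_le_mul_of_nonneg_left h4 (by linarith)
          _ = Real.log (a (k + 1)) := by
              rw [← mul_assoc, mul_comm lam q, hlamq, one_mul]
      have hlift : al * (k + 1 : ℕ) + be + lam ^ (k + 1) ≤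
          lam * (al * k + be + lam ^ k - (k + 1 : ℕ) * lg) := by
        push_cast
        have hpow : lam * lam ^ k = lam ^ (k + 1) := (pow_succ lam k).symm ▸ (mul_comm _ _)
        nlinarith [halq, hbeq, hpow, (Nat.cast_nonneg k : (0:ℝ) ≤ k)]
      have : lam * (al * k + be + lam ^ k - (k + 1 : ℕ) * lg) ≤
          lam * (Real.log (a k) - (k + 1 : ℕ) * lg) :=
        mul_le_mul_of_nonneg_left (by linarith) (by linarith)
      push_cast at hlift this hstep ⊢
      linarith
  obtain ⟨n, hn⟩ := pow_unbounded_of_one_lt (Real.log B - be) hlam1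
  obtain ⟨han, hlogn⟩ := key n
  have : Real.log (a n) ≤ Real.log B := Real.log_le_log han (hB n)
  have hkn : (0:ℝ) ≤ al * n := mul_nonneg hal0.le (Nat.cast_nonneg n)
  linarith
/-- Fefferman–Stein type inequality for nonnegative subharmonic functions:
for `N ≥ 2` and `p > 0` there is a constant `C = C(N,p)` such that for every domain
`D ⊆ ℝ^N` and every nonnegative subharmonic `u` on `D`,
`u(x)^p ≤ (C/(ν_N r^N)) ∫_{B(x,r)} u^p dm_N` whenever `B̄(x,r) ⊆ D`. -/
theorem statement0 (N : ℕ) (hN : 2 ≤ N) (p : ℝ) (hp : 0 < p) :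
    ∃ C : ℝ, 0 < C ∧
      ∀ (D : Set (EuclideanSpace ℝ (Fin N))), IsOpen D → IsConnected D →
        ∀ u : EuclideanSpace ℝ (Fin N) → ℝ, (∀ x ∈ D, 0 ≤ u x) →
          IsSubh D (fun x => (u x : EReal)) →
          ∀ x ∈ D, ∀ r > (0:ℝ), closedBall x r ⊆ D →
            u x ^ p ≤ C * ((volume (ball x r)).toReal)⁻¹ * ∫ y in ball x r, u y ^ p := by
  have hN0 : N ≠ 0 := by omega
  haveI : Nonempty (Fin N) := ⟨⟨0, by omega⟩⟩
  have hG1 : (1:ℝ) < 2 ^ N := one_lt_pow₀ (by norm_num) hN0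
  -- choose the constant
  rcases lt_or_ge p 1 with hp1 | hp1
  case inl =>
    obtain ⟨C₀, hC₀1, hC₀⟩ := iter_key (q := 1 - p) (by linarith) (by linarith) hG1
    have hC₀0 : (0:ℝ) < C₀ := lt_of_lt_of_le zero_lt_one hC₀1
    refine ⟨C₀ ^ p, Real.rpow_pos_of_pos hC₀0 p, ?_⟩
    intro D hD _hconn u hpos hsubh x₀ hx₀ r hr hball
    obtain ⟨husc, _hne, hsub⟩ := hsubh
    have huscr : UpperSemicontinuousOn u D := usc_real husc
    set w := D.indicator u with hw
    have hwmeas : Measurable w := meas_ind hD huscr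
    have hw0 : ∀ y, 0 ≤ w y := fun y => Set.indicator_nonneg (fun z hz => hpos z hz) y
    obtain ⟨M, hM⟩ := usc_bdd hD huscr (isCompact_closedBall x₀ r) hball
    set Mb : ℝ := max M 0 with hMb
    have hwle : ∀ y ∈ closedBall x₀ r, w y ≤ Mb := fun y hy => by
      rw [hw, Set.indicator_of_mem (hball hy)]
      exact le_trans (hM y hy) (le_max_left _ _)
    have hintball : IntegrableOn w (closedBall x₀ r) :=
      Measure.integrableOn_of_bounded measure_closedBall_lt_top.ne
        hwmeas.aestronglyMeasurable
        ((ae_restrict_iff' measurableSet_closedBall).2 (ae_of_all _ fun y hy => by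
          rw [Real.norm_eq_abs, abs_of_nonneg (hw0 y)]; exact hwle y hy))
    have hwpmeas : Measurable fun y => w y ^ p :=
      (Real.continuous_rpow_const hp.le).measurable.comp hwmeas
    have hintp : IntegrableOn (fun y => w y ^ p) (closedBall x₀ r) :=
      Measure.integrableOn_of_bounded (M := Mb ^ p) measure_closedBall_lt_top.ne
        hwpmeas.aestronglyMeasurable
        ((ae_restrict_iff' measurableSet_closedBall).2 (ae_of_all _ fun y hy => by
          rw [Real.norm_eq_abs, abs_of_nonneg (Real.rpow_nonneg (hw0 y) p)]
          exact Real.rpow_le_rpow (hw0 y) (hwle y hy) hp.le))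
    set V : ℝ := (volume (ball x₀ r)).toReal with hVdef
    have hV0 : 0 < V :=
      ENNReal.toReal_pos (measure_ball_pos _ _ hr).ne' measure_ball_lt_top.ne
    set I : ℝ := ∫ y in ball x₀ r, w y ^ p with hIdef
    have hI0 : 0 ≤ I :=
      setIntegral_nonneg measurableSet_ball fun y _ => Real.rpow_nonneg (hw0 y) p
    have hIeq : ∫ y in ball x₀ r, u y ^ p = I := by
      refine setIntegral_congr_fun measurableSet_ball fun y hy => ?_
      rw [hw, Set.indicator_of_mem (hball (ball_subset_closedBall hy))]
    rw [hIeq]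
    -- geometry of the dyadic balls
    set t : ℕ → ℝ := fun k => r * (1 - ((2:ℝ) ^ k)⁻¹) with htdef
    set ρ : ℕ → ℝ := fun k => r * ((2:ℝ) ^ (k+1))⁻¹ with hρdef
    have h2k : ∀ k : ℕ, (1:ℝ) ≤ 2 ^ k := fun k => one_le_pow₀ (by norm_num)
    have ht0 : ∀ k, 0 ≤ t k := fun k => by
      have := h2k k
      have h2 : (0:ℝ) < 2 ^ k := by positivity
      have : ((2:ℝ) ^ k)⁻¹ ≤ 1 := by rw [inv_le_one_iff₀]; right; exact this
      simp only [htdef]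
      have : 0 ≤ 1 - ((2:ℝ) ^ k)⁻¹ := by linarith
      positivity
    have htr : ∀ k, t k < r := fun k => by
      have h2 : (0:ℝ) < ((2:ℝ) ^ k)⁻¹ := by positivity
      simp only [htdef]
      nlinarith
    have hρ0 : ∀ k, 0 < ρ k := fun k => by simp only [hρdef]; positivity
    have htsum : ∀ k, t k + ρ k = t (k + 1) := fun k => by
      simp only [htdef, hρdef]
      have h2 : (2:ℝ) ^ (k+1) = 2 ^ k * 2 := pow_succ 2 k
      have h2k0 : (2:ℝ) ^ k ≠ 0 := by positivity
      field_simp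
      ring
    -- the suprema
    set s : ℕ → ℝ := fun k => sSup (w '' closedBall x₀ (t k)) with hsdef
    have hmem : ∀ k, w x₀ ∈ w '' closedBall x₀ (t k) := fun k =>
      mem_image_of_mem _ (mem_closedBall_self (ht0 k))
    have himg : ∀ k, ∀ y ∈ w '' closedBall x₀ (t k), y ≤ Mb := by
      rintro k _ ⟨z, hz, rfl⟩
      exact hwle z (closedBall_subset_closedBall (htr k).le hz)
    have hbdd : ∀ k, BddAbove (w '' closedBall x₀ (t k)) := fun k => ⟨Mb, himg k⟩
    have hs0 : ∀ k, 0 ≤ s k := fun k =>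
      le_trans (hw0 x₀) (le_csSup (hbdd k) (hmem k))
    have hsle : ∀ k, s k ≤ Mb := fun k =>
      csSup_le ⟨_, hmem k⟩ (himg k)
    have hwles : ∀ k, ∀ y ∈ closedBall x₀ (t k), w y ≤ s k := fun k y hy =>
      le_csSup (hbdd k) (mem_image_of_mem _ hy)
    -- volume computation
    have hvol : ∀ (k : ℕ) (z : EuclideanSpace ℝ (Fin N)),
        (volume (ball z (ρ k))).toReal⁻¹ = ((2:ℝ) ^ N) ^ (k+1) * V⁻¹ := by
      intro k z
      have hb1 : volume (ball z (ρ k)) =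
          ENNReal.ofReal ((ρ k) ^ N) * volume (ball (0 : EuclideanSpace ℝ (Fin N)) 1) := by
        rw [Measure.addHaar_ball volume z (hρ0 k).le, finrank_euclideanSpace_fin]
      have hb2 : volume (ball x₀ r) =
          ENNReal.ofReal (r ^ N) * volume (ball (0 : EuclideanSpace ℝ (Fin N)) 1) := by
        rw [Measure.addHaar_ball volume x₀ hr.le, finrank_euclideanSpace_fin]
      set ν : ℝ := (volume (ball (0 : EuclideanSpace ℝ (Fin N)) 1)).toReal with hνdef
      have hν0 : 0 < ν :=
        ENNReal.toReal_pos (measure_ball_pos _ _ one_pos).ne' measure_ball_lt_top.ne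
      have hVν : V = r ^ N * ν := by
        rw [hVdef, hb2, ENNReal.toReal_mul, ENNReal.toReal_ofReal (by positivity)]
      have hvν : (volume (ball z (ρ k))).toReal = (ρ k) ^ N * ν := by
        rw [hb1, ENNReal.toReal_mul, ENNReal.toReal_ofReal (by positivity)]
      rw [hvν, hVν]
      have hρk : (ρ k) ^ N = r ^ N * (((2:ℝ) ^ N) ^ (k+1))⁻¹ := by
        simp only [hρdef]
        rw [mul_pow, inv_pow, ← pow_mul, ← pow_mul, Nat.mul_comm]
      rw [hρk]
      have h2N : (0:ℝ) < ((2:ℝ) ^ N) ^ (k+1) := by positivity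
      field_simp
    -- the recurrence
    have hrec : ∀ k, s k ≤ ((2:ℝ) ^ N) ^ (k+1) * (V⁻¹ * I) * s (k+1) ^ (1 - p) := by
      intro k
      refine csSup_le ⟨_, hmem k⟩ ?_
      rintro _ ⟨z, hz, rfl⟩
      have hzD : z ∈ D := hball (closedBall_subset_closedBall (htr k).le hz)
      have hsub2 : closedBall z (ρ k) ⊆ closedBall x₀ (t (k+1)) := by
        refine closedBall_subset_closedBall' ?_
        rw [← htsum k]
        have := mem_closedBall.1 hz
        linarith
      have hsub3 : closedBall z (ρ k) ⊆ closedBall x₀ r :=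
        hsub2.trans (closedBall_subset_closedBall (htr (k+1)).le)
      have hsubD2 : closedBall z (ρ k) ⊆ D := hsub3.trans hball
      have hmean := submean_real hpos hsub hzD (hρ0 k) hsubD2
        (hintball.mono_set (ball_subset_closedBall.trans hsub3))
      have hwz : w z = u z := Set.indicator_of_mem hzD u
      have hi1 : ∫ y in ball z (ρ k), w y ≤ s (k+1) ^ (1 - p) * I := by
        have hstep1 : ∫ y in ball z (ρ k), w y ≤
            ∫ y in ball z (ρ k), s (k+1) ^ (1 - p) * w y ^ p := by
          refine setIntegral_mono_on (hintball.mono_set (ball_subset_closedBall.trans hsub3))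
            ((hintp.mono_set (ball_subset_closedBall.trans hsub3)).const_mul _)
            measurableSet_ball fun y hy => ?_
          exact pw_rpow (hw0 y) (hwles (k+1) y (hsub2 (ball_subset_closedBall hy))) hp hp1.le
        have hstep2 : ∫ y in ball z (ρ k), s (k+1) ^ (1 - p) * w y ^ p =
            s (k+1) ^ (1 - p) * ∫ y in ball z (ρ k), w y ^ p := integral_const_mul _ _
        have hsubball : ball z (ρ k) ⊆ ball x₀ r :=
          ball_subset_closedBall.trans (hsub2.trans (closedBall_subset_ball (htr (k+1))))
        have hstep3 : ∫ y in ball z (ρ k), w y ^ p ≤ I := by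
          refine setIntegral_mono_set (hintp.mono_set ball_subset_closedBall)
            (ae_of_all _ fun y => Real.rpow_nonneg (hw0 y) p)
            (HasSubset.Subset.eventuallyLE hsubball)
        calc ∫ y in ball z (ρ k), w y ≤ s (k+1) ^ (1 - p) * ∫ y in ball z (ρ k), w y ^ p := by
              rw [← hstep2]; exact hstep1
          _ ≤ s (k+1) ^ (1 - p) * I :=
              mul_le_mul_of_nonneg_left hstep3 (Real.rpow_nonneg (hs0 (k+1)) _)
      calc w z = u z := hwz
        _ ≤ (volume (ball z (ρ k))).toReal⁻¹ * ∫ y in ball z (ρ k), w y := hmean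
        _ ≤ (volume (ball z (ρ k))).toReal⁻¹ * (s (k+1) ^ (1 - p) * I) :=
            mul_le_mul_of_nonneg_left hi1 (by positivity)
        _ = ((2:ℝ) ^ N) ^ (k+1) * (V⁻¹ * I) * s (k+1) ^ (1 - p) := by
            rw [hvol k z]; ring
    -- conclude
    rcases eq_or_lt_of_le (by positivity : (0:ℝ) ≤ V⁻¹ * I) with hJ | hJ
    · -- degenerate case
      have hs00 : s 0 ≤ 0 := by
        have := hrec 0
        rw [← hJ, mul_zero, zero_mul] at this
        exact this
      have hux : u x₀ = 0 := by
        have h1 : u x₀ ≤ 0 := by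
          have : w x₀ ≤ s 0 := hwles 0 x₀ (mem_closedBall_self (ht0 0))
          rw [hw, Set.indicator_of_mem hx₀] at this
          linarith
        exact le_antisymm h1 (hpos x₀ hx₀)
      rw [hux, Real.zero_rpow hp.ne']
      have : C₀ ^ p * V⁻¹ * I = C₀ ^ p * (V⁻¹ * I) := by ring
      rw [this, ← hJ, mul_zero]
    · -- main case
      set J : ℝ := V⁻¹ * I with hJdef
      set T : ℝ := J ^ p⁻¹ with hTdef
      have hT0 : 0 < T := Real.rpow_pos_of_pos hJ _
      have hJT : J = T ^ p := (Real.rpow_inv_rpow (le_of_lt hJ) hp.ne').symm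
      set b : ℕ → ℝ := fun k => s k * T⁻¹ with hbdef
      have hb0 : ∀ k, 0 ≤ b k := fun k => mul_nonneg (hs0 k) (by positivity)
      have hbB : ∀ k, b k ≤ Mb * T⁻¹ := fun k =>
        mul_le_mul_of_nonneg_right (hsle k) (by positivity)
      have hTT : T ^ p * T ^ (1 - p) * T⁻¹ = 1 := by
        rw [← Real.rpow_neg_one T, ← Real.rpow_add hT0, ← Real.rpow_add hT0]
        norm_num
      have hbrec : ∀ k, b k ≤ ((2:ℝ) ^ N) ^ (k+1) * b (k+1) ^ (1 - p) := by
        intro k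
        have hsb : s (k+1) = b (k+1) * T := by
          simp only [hbdef]
          field_simp
        calc b k = s k * T⁻¹ := rfl
          _ ≤ (((2:ℝ) ^ N) ^ (k+1) * J * s (k+1) ^ (1 - p)) * T⁻¹ :=
              mul_le_mul_of_nonneg_right (hrec k) (by positivity)
          _ = ((2:ℝ) ^ N) ^ (k+1) * b (k+1) ^ (1 - p) * (T ^ p * T ^ (1 - p) * T⁻¹) := by
              rw [hJT, hsb, Real.mul_rpow (hb0 (k+1)) hT0.le]; ring
          _ = ((2:ℝ) ^ N) ^ (k+1) * b (k+1) ^ (1 - p) := by rw [hTT, mul_one]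
      have hb0le : b 0 ≤ C₀ := hC₀ b (Mb * T⁻¹) hb0 hbB hbrec
      have hs0le : s 0 ≤ C₀ * T := by
        have := mul_le_mul_of_nonneg_right hb0le hT0.le
        rw [hbdef] at this
        simp only at this
        rwa [mul_assoc, inv_mul_cancel₀ hT0.ne', mul_one] at this
      have hux : u x₀ ≤ C₀ * T := by
        have : w x₀ ≤ s 0 := hwles 0 x₀ (mem_closedBall_self (ht0 0))
        rw [hw, Set.indicator_of_mem hx₀] at this
        linarith
      calc u x₀ ^ p ≤ (C₀ * T) ^ p :=
            Real.rpow_le_rpow (hpos x₀ hx₀) hux hp.le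
        _ = C₀ ^ p * T ^ p := Real.mul_rpow hC₀0.le hT0.le
        _ = C₀ ^ p * J := by rw [← hJT]
        _ = C₀ ^ p * V⁻¹ * I := by rw [hJdef]; ring
  case inr =>
    refine ⟨1, one_pos, ?_⟩
    intro D hD _hconn u hpos hsubh x₀ hx₀ r hr hball
    obtain ⟨husc, _hne, hsub⟩ := hsubh
    have huscr : UpperSemicontinuousOn u D := usc_real husc
    set w := D.indicator u with hw
    have hwmeas : Measurable w := meas_ind hD huscr
    have hw0 : ∀ y, 0 ≤ w y := fun y => Set.indicator_nonneg (fun z hz => hpos z hz) y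
    obtain ⟨M, hM⟩ := usc_bdd hD huscr (isCompact_closedBall x₀ r) hball
    set Mb : ℝ := max M 0 with hMb
    have hwle : ∀ y ∈ closedBall x₀ r, w y ≤ Mb := fun y hy => by
      rw [hw, Set.indicator_of_mem (hball hy)]
      exact le_trans (hM y hy) (le_max_left _ _)
    have hintball : IntegrableOn w (closedBall x₀ r) :=
      Measure.integrableOn_of_bounded measure_closedBall_lt_top.ne
        hwmeas.aestronglyMeasurable
        ((ae_restrict_iff' measurableSet_closedBall).2 (ae_of_all _ fun y hy => by
          rw [Real.norm_eq_abs, abs_of_nonneg (hw0 y)]; exact hwle y hy))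
    have hwpmeas : Measurable fun y => w y ^ p :=
      (Real.continuous_rpow_const hp.le).measurable.comp hwmeas
    have hintp : IntegrableOn (fun y => w y ^ p) (closedBall x₀ r) :=
      Measure.integrableOn_of_bounded (M := Mb ^ p) measure_closedBall_lt_top.ne
        hwpmeas.aestronglyMeasurable
        ((ae_restrict_iff' measurableSet_closedBall).2 (ae_of_all _ fun y hy => by
          rw [Real.norm_eq_abs, abs_of_nonneg (Real.rpow_nonneg (hw0 y) p)]
          exact Real.rpow_le_rpow (hw0 y) (hwle y hy) hp.le))
    set V : ℝ := (volume (ball x₀ r)).toReal with hVdef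
    have hV0 : 0 < V :=
      ENNReal.toReal_pos (measure_ball_pos _ _ hr).ne' measure_ball_lt_top.ne
    have hIeq : ∫ y in ball x₀ r, u y ^ p = ∫ y in ball x₀ r, w y ^ p := by
      refine setIntegral_congr_fun measurableSet_ball fun y hy => ?_
      rw [hw, Set.indicator_of_mem (hball (ball_subset_closedBall hy))]
    rw [hIeq]
    have hmean := submean_real hpos hsub hx₀ hr hball
      (hintball.mono_set ball_subset_closedBall)
    -- Jensen
    haveI : IsFiniteMeasure (volume.restrict (ball x₀ r)) := ⟨by
      rw [Measure.restrict_apply_univ]; exact measure_ball_lt_top⟩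
    haveI : NeZero (volume.restrict (ball x₀ r)) := ⟨by
      rw [Ne, Measure.restrict_eq_zero]
      exact (measure_ball_pos _ _ hr).ne'⟩
    have hcont : ContinuousOn (fun x : ℝ => x ^ p) (Ici 0) :=
      fun x _ => (Real.continuousAt_rpow_const x p (Or.inr hp.le)).continuousWithinAt
    have hjen := (convexOn_rpow hp1).map_average_le hcont isClosed_Ici
      (ae_of_all _ fun y => hw0 y)
      (hintball.mono_set ball_subset_closedBall)
      (hintp.mono_set ball_subset_closedBall)
    rw [average_eq, average_eq, measureReal_restrict_apply_univ] at hjen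
    simp only [smul_eq_mul] at hjen
    have h1 : u x₀ ^ p ≤ (V⁻¹ * ∫ y in ball x₀ r, w y) ^ p :=
      Real.rpow_le_rpow (hpos x₀ hx₀) hmean hp.le
    calc u x₀ ^ p ≤ (V⁻¹ * ∫ y in ball x₀ r, w y) ^ p := h1
      _ ≤ V⁻¹ * ∫ y in ball x₀ r, w y ^ p := hjen
      _ = 1 * V⁻¹ * ∫ y in ball x₀ r, w y ^ p := by ring
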